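/- Let (ξ_m)_{m ≥ 1} be a summable sequence of non-negative real numbers and let ε > 0. Then there exists a sequence (σ_m)_{m ≥ 1} of real numbers with 1 ≥ σ_1 ≥ σ_2 ≥ ⋯ > 0 and σ_m → 0 as m → ∞, such that ∑_{m=1}^{∞} ξ_m/σ_m ≤ (1 + ε) · ∑_{m=1}^{∞} ξ_m. -/

import Mathlib

/-- for a summable sequence `(ξ_m)` of non-negative reals and
`ε > 0`, there is a non-increasing sequence `(σ_m)` with `1 ≥ σ_0 ≥ σ_1 ≥ ⋯ > 0`
tending to `0` such that `∑ ξ_m/σ_m ≤ (1+ε) ∑ ξ_m`. -/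
theorem stmt_13 (ξ : ℕ → ℝ) (hξ : ∀ m, 0 ≤ ξ m) (hsum : Summable ξ)
    (ε : ℝ) (hε : 0 < ε) :
    ∃ σ : ℕ → ℝ,
      σ 0 ≤ 1 ∧
      Antitone σ ∧
      (∀ m, 0 < σ m) ∧
      Filter.Tendsto σ Filter.atTop (nhds 0) ∧
      Summable (fun m => ξ m / σ m) ∧
      ∑' m, ξ m / σ m ≤ (1 + ε) * ∑' m, ξ m := by
  set A : ℝ := ∑' m, ξ m with hA
  have hA0 : 0 ≤ A := tsum_nonneg hξ
  rcases eq_or_lt_of_le hA0 with hA0' | hApos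
  · -- A = 0, so ξ ≡ 0
    have hξ0 : ∀ m, ξ m = 0 := by
      intro m
      have := hsum.le_tsum m (fun k _ => hξ k)
      linarith [hξ m]
    refine ⟨fun m => 1 / (m + 1), by norm_num, ?_, ?_, ?_, ?_, ?_⟩
    · intro a b hab
      have h1 : (0:ℝ) < (a:ℝ) + 1 := by positivity
      apply one_div_le_one_div_of_le h1
      have : (a:ℝ) ≤ (b:ℝ) := Nat.cast_le.mpr hab
      linarith
    · intro m; positivity
    · simpa [one_div] using (tendsto_one_div_add_atTop_nhds_zero_nat (𝕜 := ℝ))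
    · simpa [hξ0] using summable_zero
    · simp only [hξ0, zero_div, tsum_zero]
      nlinarith
  · -- A > 0
    set η : ℕ → ℝ := fun m => ξ m + (1/2)^m with hη
    have hηsum : Summable η :=
      hsum.add (summable_geometric_of_lt_one (by norm_num) (by norm_num))
    have hηpos : ∀ m, 0 < η m := by
      intro m
      have h1 : (0:ℝ) < (1/2)^m := by positivity
      have := hξ m
      simp only [hη]; linarith
    set T : ℕ → ℝ := fun m => ∑' k, η (k + m) with hT
    have hTsum : ∀ m, Summable fun k => η (k + m) := fun m =>
      (summable_nat_add_iff m).mpr hηsum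
    have hTpos : ∀ m, 0 < T m := by
      intro m
      have h0 : η (0 + m) ≤ T m := (hTsum m).le_tsum 0 (fun k _ => (hηpos _).le)
      exact lt_of_lt_of_le (hηpos (0 + m)) h0
    have hTrec : ∀ m, T m = η m + T (m + 1) := by
      intro m
      have h := (hTsum m).tsum_eq_zero_add
      simp only [zero_add] at h
      calc T m = ∑' k, η (k + m) := rfl
        _ = η m + ∑' k, η (k + 1 + m) := h
        _ = η m + T (m + 1) := by
            congr 1
            apply tsum_congr; intro k
            congr 1
            omega
    have hTanti : Antitone T := by
      apply antitone_nat_of_succ_le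
      intro m
      have := hTrec m
      linarith [hηpos m]
    have hTto0 : Filter.Tendsto T Filter.atTop (nhds 0) := tendsto_sum_nat_add η
    set g : ℕ → ℝ := fun m => Real.sqrt (T m) with hg
    have hgpos : ∀ m, 0 < g m := fun m => Real.sqrt_pos.mpr (hTpos m)
    have hganti : Antitone g := fun a b hab => Real.sqrt_le_sqrt (hTanti hab)
    have hgto0 : Filter.Tendsto g Filter.atTop (nhds 0) := by
      have := hTto0.sqrt
      simpa using this
    -- key telescoping bound
    have hxg_le : ∀ m, ξ m / g m ≤ 2 * (g m - g (m + 1)) := by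
      intro m
      have hgm := hgpos m
      have hgm1 := hgpos (m + 1)
      have hle : g (m + 1) ≤ g m := hganti (Nat.le_succ m)
      have hsq : ∀ n, g n ^ 2 = T n := fun n => Real.sq_sqrt (hTpos n).le
      have hηeq : η m = g m ^ 2 - g (m + 1) ^ 2 := by
        rw [hsq, hsq]; linarith [hTrec m]
      have hξη : ξ m ≤ η m := by
        simp only [hη]
        have : (0:ℝ) < (1/2)^m := by positivity
        linarith
      have step1 : ξ m / g m ≤ η m / g m := (div_le_div_iff_of_pos_right hgm).mpr hξη
      have step2 : η m / g m ≤ 2 * (g m - g (m + 1)) := by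
        rw [div_le_iff₀ hgm, hηeq]
        nlinarith [sq_nonneg (g m - g (m + 1))]
      linarith
    have hxg_nonneg : ∀ m, 0 ≤ ξ m / g m := fun m => div_nonneg (hξ m) (hgpos m).le
    have hpartial : ∀ n, ∑ i ∈ Finset.range n, ξ i / g i ≤ 2 * g 0 := by
      intro n
      calc ∑ i ∈ Finset.range n, ξ i / g i
          ≤ ∑ i ∈ Finset.range n, 2 * (g i - g (i + 1)) :=
            Finset.sum_le_sum (fun i _ => hxg_le i)
        _ = 2 * (g 0 - g n) := by
            rw [← Finset.mul_sum, Finset.sum_range_sub' g n]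
        _ ≤ 2 * g 0 := by linarith [(hgpos n).le]
    have hxg_sum : Summable (fun m => ξ m / g m) :=
      summable_of_sum_range_le hxg_nonneg hpartial
    have hxg_tsum : ∑' m, ξ m / g m ≤ 2 * g 0 :=
      hxg_sum.tsum_le_of_sum_range_le hpartial
    set c : ℝ := ε * A / (2 * g 0 + 1) with hc
    have hg0 := hgpos 0
    have hcpos : 0 < c := div_pos (mul_pos hε hApos) (by linarith)
    -- the sequence
    refine ⟨fun m => 1 / (1 + c / g m), ?_, ?_, ?_, ?_, ?_, ?_⟩
    · have h0 : 0 ≤ c / g 0 := (div_pos hcpos hg0).le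
      rw [div_le_one (by linarith)]; linarith
    · intro a b hab
      have ha : 0 < 1 + c / g a := by positivity
      apply one_div_le_one_div_of_le ha
      have hmono : c / g a ≤ c / g b :=
        div_le_div_of_nonneg_left hcpos.le (hgpos b) (hganti hab)
      linarith
    · intro m; positivity
    · -- tendsto 0
      have h1 : Filter.Tendsto g Filter.atTop (nhds 0) := hgto0
      have h2 : Filter.Tendsto g Filter.atTop (nhdsWithin 0 (Set.Ioi 0)) := by
        rw [tendsto_nhdsWithin_iff]
        exact ⟨h1, Filter.Eventually.of_forall (fun m => hgpos m)⟩
      have h3 : Filter.Tendsto (fun m => (g m)⁻¹) Filter.atTop Filter.atTop :=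
        tendsto_inv_nhdsGT_zero.comp h2
      have h4 : Filter.Tendsto (fun m => c / g m) Filter.atTop Filter.atTop := by
        simp only [div_eq_mul_inv]
        exact h3.const_mul_atTop hcpos
      have h5 : Filter.Tendsto (fun m => 1 + c / g m) Filter.atTop Filter.atTop :=
        Filter.tendsto_atTop_add_const_left _ 1 h4
      have h6 := h5.inv_tendsto_atTop
      simpa [one_div, Pi.inv_def] using h6
    · -- summable
      have heq : (fun m => ξ m / (1 / (1 + c / g m))) =
          fun m => ξ m + c * (ξ m / g m) := by
        funext m
        have hgm := hgpos m
        have h1 : (0:ℝ) < 1 + c / g m := by positivity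
        field_simp
      rw [heq]
      exact hsum.add (hxg_sum.mul_left c)
    · -- the bound
      have heq : (fun m => ξ m / (1 / (1 + c / g m))) =
          fun m => ξ m + c * (ξ m / g m) := by
        funext m
        have hgm := hgpos m
        have h1 : (0:ℝ) < 1 + c / g m := by positivity
        field_simp
      calc ∑' m, ξ m / (1 / (1 + c / g m))
          = ∑' m, (ξ m + c * (ξ m / g m)) := by rw [← heq]
        _ = A + c * ∑' m, ξ m / g m := by
            rw [hsum.tsum_add (hxg_sum.mul_left c), tsum_mul_left]
        _ ≤ A + c * (2 * g 0) := by
            have := mul_le_mul_of_nonneg_left hxg_tsum hcpos.le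
            linarith
        _ ≤ A + ε * A := by
            have key : c * (2 * g 0) ≤ ε * A := by
              rw [hc, div_mul_eq_mul_div, div_le_iff₀ (by linarith : (0:ℝ) < 2 * g 0 + 1)]
              nlinarith [mul_pos hε hApos]
            linarith
        _ = (1 + ε) * A := by ring
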